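/- Every quotient of a finitely separable ring is finitely separable: if $K$ is finitely separable and $I$ is a two-sided ideal of $K$, then $K/I$ is finitely separable. -/

import Mathlib

/-- A (not necessarily unital) ring `K` is finitely separable if every element `a`
lying outside a subring `A` can be separated from `A` by a homomorphism to a finite ring. -/
def IsFinSep (K : Type) [NonUnitalRing K] : Prop :=
  ∀ (a : K) (A : NonUnitalSubring K), a ∉ A →
    ∃ (F : Type) (_ : NonUnitalRing F) (_ : Finite F),
      ∃ φ : K →ₙ+* F, φ a ∉ ⇑φ '' (A : Set K)

/-- `ppow a n = a ^ (n + 1)`, the positive powers of `a` in a non-unital ring. -/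
def ppow {K : Type} [NonUnitalRing K] (a : K) : ℕ → K
  | 0 => a
  | n + 1 => ppow a n * a

/-- Evaluation of an integer polynomial (whose constant term is ignored, hence
meaningful for polynomials with zero constant term) at an element of a non-unital ring. -/
def evalnc {K : Type} [NonUnitalRing K] (p : Polynomial ℤ) (a : K) : K :=
  ∑ i ∈ Finset.range p.natDegree, p.coeff (i + 1) • ppow a i

/-- The quotient map of a ring congruence, as a non-unital ring hom. -/
def RingCon.mkn {K : Type} [NonUnitalRing K] (c : RingCon K) : K →ₙ+* c.Quotient where
  toFun := fun x => (x : c.Quotient)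
  map_mul' := fun _ _ => rfl
  map_add' := fun _ _ => rfl
  map_zero' := rfl

/-- Lift a non-unital ring hom along a ring congruence it respects. -/
def RingCon.liftn {K L : Type} [NonUnitalRing K] [NonUnitalRing L] (c : RingCon K)
    (f : K →ₙ+* L) (h : ∀ x y : K, c.toSetoid.r x y → f x = f y) :
    c.Quotient →ₙ+* L where
  toFun := Quotient.lift f h
  map_mul' := fun x y => Quotient.inductionOn₂ x y fun a b => map_mul f a b
  map_add' := fun x y => Quotient.inductionOn₂ x y fun a b => map_add f a b
  map_zero' := map_zero f

@[simp] theorem RingCon.liftn_mkn {K L : Type} [NonUnitalRing K] [NonUnitalRing L]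
    (c : RingCon K) (f : K →ₙ+* L) (h) (x : K) : c.liftn f h (c.mkn x) = f x := rfl

theorem RingCon.mkn_surjective {K : Type} [NonUnitalRing K] (c : RingCon K) :
    Function.Surjective c.mkn := fun q => Quotient.exists_rep q

/-- Every quotient of a finitely separable ring is finitely separable. -/
theorem stmt1 (K : Type) [NonUnitalRing K] (hK : IsFinSep K) (I : TwoSidedIdeal K) :
    IsFinSep I.ringCon.Quotient := by
  intro a A haA
  set π : K →ₙ+* I.ringCon.Quotient := I.ringCon.mkn with hπ
  obtain ⟨a', ha'⟩ := I.ringCon.mkn_surjective a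
  set A' : NonUnitalSubring K := A.comap π with hA'
  have ha'A' : a' ∉ A' := by
    intro h
    exact haA (by rwa [← ha'])
  obtain ⟨F, _, _, φ, hφ⟩ := hK a' A' ha'A'
  -- restrict to the range of φ
  set φ₀ : K →ₙ+* φ.range := φ.rangeRestrict with hφ₀
  have hsurj : Function.Surjective φ₀ := φ.rangeRestrict_surjective
  -- the image of I under φ₀ is a two-sided ideal of the range
  set J : TwoSidedIdeal φ.range := TwoSidedIdeal.mk' (⇑φ₀ '' (I : Set K))
    ⟨0, I.zero_mem, map_zero φ₀⟩
    (by rintro _ _ ⟨x, hx, rfl⟩ ⟨y, hy, rfl⟩; exact ⟨x + y, I.add_mem hx hy, map_add φ₀ x y⟩)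
    (by rintro _ ⟨x, hx, rfl⟩; exact ⟨-x, I.neg_mem hx, map_neg φ₀ x⟩)
    (by rintro z _ ⟨y, hy, rfl⟩
        obtain ⟨x, rfl⟩ := hsurj z
        exact ⟨x * y, I.mul_mem_left x y hy, map_mul φ₀ x y⟩)
    (by rintro _ y ⟨x, hx, rfl⟩
        obtain ⟨z, rfl⟩ := hsurj y
        exact ⟨x * z, I.mul_mem_right x z hx, map_mul φ₀ x z⟩) with hJ
  refine ⟨J.ringCon.Quotient, inferInstance, ?_, ?_⟩
  · have : Finite φ.range := Subtype.finite
    exact Quotient.finite _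
  · -- the induced map from the quotient
    have hresp : ∀ x y : K, I.ringCon.toSetoid.r x y →
        J.ringCon.mkn (φ₀ x) = J.ringCon.mkn (φ₀ y) := by
      intro x y (hxy : I.ringCon x y)
      rw [TwoSidedIdeal.rel_iff] at hxy
      show (↑(φ₀ x) : J.ringCon.Quotient) = ↑(φ₀ y)
      rw [RingCon.eq, TwoSidedIdeal.rel_iff, ← map_sub]
      refine (TwoSidedIdeal.mem_mk' ..).mpr ?_
      exact ⟨x - y, hxy, rfl⟩
    refine ⟨I.ringCon.liftn (J.ringCon.mkn.comp φ₀) hresp, ?_⟩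
    · -- separation
      rintro ⟨b, hbA, hb⟩
      obtain ⟨x', hx'⟩ := I.ringCon.mkn_surjective b
      have hx'A' : x' ∈ A' := by
        rw [hA', NonUnitalSubring.mem_comap, hx']; exact hbA
      -- hb : ψ b = ψ a ; unfold
      have key : (↑(φ₀ x') : J.ringCon.Quotient) = ↑(φ₀ a') := by
        have h1 : b = Quotient.mk _ x' := hx'.symm
        have h2 : a = Quotient.mk _ a' := ha'.symm
        rw [h1, h2] at hb
        exact hb
      rw [RingCon.eq, TwoSidedIdeal.rel_iff] at key
      replace key := (TwoSidedIdeal.mem_mk' ..).mp key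
      rw [← map_sub] at key
      obtain ⟨i, hi, hiφ⟩ := key
      have hia : φ a' = φ (x' - i) := by
        have h3 : φ i = φ (x' - a') := congrArg Subtype.val hiφ
        rw [map_sub] at h3 ⊢
        rw [h3]; abel
      have hiA' : i ∈ A' := by
        rw [hA', NonUnitalSubring.mem_comap]
        have : π i = 0 := by
          show (↑i : I.ringCon.Quotient) = ↑(0 : K)
          rw [RingCon.eq, TwoSidedIdeal.rel_iff]
          simpa using hi
        rw [this]; exact A.zero_mem
      exact hφ ⟨x' - i, A'.sub_mem hx'A' hiA', hia.symm⟩
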